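/- Let g ∈ G_n with n ≥ 1. Then there are exactly 2ⁿ uphills u with σ(u) = 1 and τ(u) = g, and exactly 2ⁿ downhills u with σ(u) = g and τ(u) = 1. -/

import Mathlib

namespace WGO

/-- Letters: the anchors `1`, `x`, `x'` (written `one`, `x`, `xp`) and 5-tuples. -/
inductive Letter : Type
  | one : Letter
  | x : Letter
  | xp : Letter
  | tup : Letter → Letter → Letter → Letter → Letter → Letter
deriving DecidableEq

/-- The involution on anchors: `x' = xp`, `xp' = x`, `1' = 1` (junk on tuples). -/
def ainv : Letter → Letter
  | .x => .xp
  | .xp => .x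
  | a => a

/-- Left entry `g^l`. -/
def Letter.lft : Letter → Letter
  | .tup l _ _ _ _ => l
  | _ => .one

/-- Left anchor `g^{la}`. -/
def Letter.lfta : Letter → Letter
  | .tup _ la _ _ _ => la
  | _ => .one

/-- Middle entry `g^c`. -/
def Letter.ctr : Letter → Letter
  | .tup _ _ c _ _ => c
  | _ => .one

/-- Right anchor `g^{ra}`. -/
def Letter.rgta : Letter → Letter
  | .tup _ _ _ ra _ => ra
  | _ => .one

/-- Right entry `g^r`. -/
def Letter.rgt : Letter → Letter
  | .tup _ _ _ _ r => r
  | _ => .one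

/-- The 5-tuple `g_{xx'} = (1,1,x,x',1)`. -/
def gxx : Letter := .tup .one .one .x .xp .one

/-- The set of anchors `A = {1, x, x'}`. -/
def AnchorS : Set Letter := {Letter.one, Letter.x, Letter.xp}

/-- The sets `G_{i,e}`. -/
def Ge : ℕ → Set Letter
  | 0 => ∅
  | 1 => {gxx}
  | (i+2) => {h | ∃ g ∈ Ge (i+1),
      h = Letter.tup g (ainv g.lfta) g.lft (ainv g.rgta) g ∨
      h = Letter.tup g (ainv g.rgta) g.lft (ainv g.lfta) g}

/-- The sets `G_{i,d}`. -/
def Gd : ℕ → Set Letter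
  | 0 => ∅
  | 1 => ∅
  | 2 => ∅
  | (i+3) => {h | ∃ l la c ra r, h = Letter.tup l la c ra r ∧
      l ∈ Ge (i+2) ∪ Gd (i+2) ∧ r ∈ Ge (i+2) ∪ Gd (i+2) ∧
      c ∈ Ge (i+1) ∪ Gd (i+1) ∧ la ∈ AnchorS ∧ ra ∈ AnchorS ∧
      l ≠ r ∧
      ((c = l.lft ∧ la = ainv l.lfta) ∨ (c = l.rgt ∧ la = ainv l.rgta)) ∧
      ((c = r.lft ∧ ra = ainv r.lfta) ∨ (c = r.rgt ∧ ra = ainv r.rgta))}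

/-- `G_i = G_{i,e} ∪ G_{i,d}`. -/
def GI (i : ℕ) : Set Letter := Ge i ∪ Gd i

/-- `G⁵ = ⋃_{i ≥ 1} G_i`. -/
def G5 : Set Letter := {g | ∃ i, g ∈ GI i}

/-- `G = G⁵ ∪ A`. -/
def Gset : Set Letter := G5 ∪ AnchorS

/-- `G' = G⁵ ∪ {1}`. -/
def Gp : Set Letter := G5 ∪ {Letter.one}

/-- The height `↑(g)`: `0` on `1` (and anchors), and `i` on members of `G_i`. -/
def ht : Letter → ℕ
  | .tup l _ _ _ _ => ht l + 1
  | _ => 0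

/-- The free semigroup `G⁺` (on the ambient type of letters). -/
abbrev W := FreeSemigroup Letter

/-- One-letter word. -/
def wd : Letter → W := FreeSemigroup.of

/-- The word `g^L = (g^{la})' g^l g^{la}`. -/
def gLw (g : Letter) : W := wd (ainv g.lfta) * wd g.lft * wd g.lfta

/-- The word `g^R = (g^{ra})' g^r g^{ra}`. -/
def gRw (g : Letter) : W := wd (ainv g.rgta) * wd g.rgt * wd g.rgta

/-- The generating relation `ρ_e ∪ ρ_s`. -/
def rhoBase : W → W → Prop := fun u v =>
  (u = wd .x * wd .xp * wd .x ∧ v = wd .x) ∨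
  (u = wd .xp * wd .x * wd .xp ∧ v = wd .xp) ∨
  (u = wd gxx ∧ v = wd .x * wd .xp) ∨
  (∃ g ∈ Gp, u = wd .one * wd g ∧ v = wd g) ∨
  (∃ g ∈ Gp, u = wd g * wd .one ∧ v = wd g) ∨
  (∃ g ∈ Gp, u = wd g * wd g ∧ v = wd g) ∨
  (∃ g ∈ G5, 2 ≤ ht g ∧ u = wd g.ctr * gLw g * wd g ∧ v = wd g) ∨
  (∃ g ∈ G5, 2 ≤ ht g ∧ u = wd g * gRw g * wd g.ctr ∧ v = wd g) ∨
  (∃ g ∈ G5, 2 ≤ ht g ∧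
    u = wd g.rgt * wd g.rgta * wd g * wd (ainv g.lfta) * wd g.lft ∧
    v = wd g.rgt * wd g.rgta * wd g.ctr * wd (ainv g.lfta) * wd g.lft)

/-- The congruence `ρ`: the smallest congruence on `G⁺` containing `ρ_e ∪ ρ_s`. -/
def rho : Con W := conGen rhoBase

/-- The quotient `F¹ = G⁺/ρ`. -/
abbrev F1 := rho.Quotient

/-- The `ρ`-class `[u]`. -/
def cls (u : W) : F1 := (u : F1)

/-- The word of a nonempty list of letters (junk on `[]`). -/
def wordOf : List Letter → W
  | [] => wd .one
  | a :: t => t.foldl (fun w b => w * wd b) (wd a)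

/-! ### Landscapes -/

/-- A landscape datum: the first letter `g₀` together with the list of pairs
`(a₁,g₁), …, (aₙ,gₙ)`, encoding the alternating word `g₀a₁g₁⋯aₙgₙ`. -/
abbrev LS := Letter × List (Letter × Letter)

/-- The last letter `τ(u)`. -/
def lastL (u : LS) : Letter := u.2.foldl (fun _ p => p.2) u.1

/-- The letters `g₀, g₁, …, gₙ` of a landscape datum. -/
def letters (u : LS) : List Letter := u.1 :: u.2.map Prod.snd

/-- The underlying word as a list of letters, `g₀ a₁ g₁ ⋯ aₙ gₙ`. -/
def flat (u : LS) : List Letter := u.1 :: u.2.foldr (fun p r => p.1 :: p.2 :: r) []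

/-- The underlying word in `G⁺`. -/
def toW (u : LS) : W := u.2.foldl (fun w p => w * wd p.1 * wd p.2) (wd u.1)

/-- `u₁ * u₂`: concatenation of landscapes merging the doubled letter `τ(u₁) = σ(u₂)`. -/
def star (u v : LS) : LS := (u.1, u.2 ++ v.2)

/-- The triplet `g₁ a g` is left anchored. -/
def LeftAnchored (g1 a g : Letter) : Prop :=
  g ∈ G5 ∧ ((g1 = g.lft ∧ a = g.lfta) ∨ (g1 = g.rgt ∧ a = g.rgta))

/-- The triplet `g a g₁` is right anchored. -/
def RightAnchored (g a g1 : Letter) : Prop :=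
  g ∈ G5 ∧ ((g1 = g.lft ∧ a = ainv g.lfta) ∨ (g1 = g.rgt ∧ a = ainv g.rgta))

/-- The triplet `g₁ a g₂` is anchored. -/
def Anchored (g1 a g2 : Letter) : Prop :=
  LeftAnchored g1 a g2 ∨ RightAnchored g1 a g2

/-- All consecutive triplets are anchored. -/
def Chain : Letter → List (Letter × Letter) → Prop
  | _, [] => True
  | g, (a, g') :: t => Anchored g a g' ∧ Chain g' t

/-- `u` is a landscape. -/
def IsLandscape (u : LS) : Prop :=
  u.1 ∈ Gp ∧ (∀ p ∈ u.2, p.1 ∈ AnchorS ∧ p.2 ∈ Gp) ∧ Chain u.1 u.2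

/-- Each step goes up: `g_{j-1} ∈ {gⱼ^l, gⱼ^r}`. -/
def UpChain : Letter → List (Letter × Letter) → Prop
  | _, [] => True
  | g, (_, g') :: t => (g = g'.lft ∨ g = g'.rgt) ∧ UpChain g' t

/-- Each step goes down: `gⱼ ∈ {g_{j-1}^l, g_{j-1}^r}`. -/
def DownChain : Letter → List (Letter × Letter) → Prop
  | _, [] => True
  | g, (_, g') :: t => (g' = g.lft ∨ g' = g.rgt) ∧ DownChain g' t

/-- `u` is an uphill. -/
def IsUphill (u : LS) : Prop := IsLandscape u ∧ u.2 ≠ [] ∧ UpChain u.1 u.2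

/-- `u` is a downhill. -/
def IsDownhill (u : LS) : Prop := IsLandscape u ∧ u.2 ≠ [] ∧ DownChain u.1 u.2

/-- The letter `gⱼ` is a river of `u` (an interior letter with both neighbours one higher). -/
def IsRiverAt (u : LS) (j : ℕ) : Prop :=
  0 < j ∧ j + 1 < (letters u).length ∧
  ht ((letters u).getD (j-1) .one) = ht ((letters u).getD j .one) + 1 ∧
  ht ((letters u).getD (j+1) .one) = ht ((letters u).getD j .one) + 1

/-- `u` has no rivers. -/
def NoRivers (u : LS) : Prop := ∀ j, ¬ IsRiverAt u j

/-- `u` is a mountain range: a landscape with `σ(u) = τ(u) = 1`. -/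
def IsMountainRange (u : LS) : Prop :=
  IsLandscape u ∧ u.1 = Letter.one ∧ lastL u = Letter.one

/-- `u` is a mountain: a mountain range with no rivers. -/
def IsMountain (u : LS) : Prop := IsMountainRange u ∧ NoRivers u

/-- Uplifting of a river: `u → v`. -/
def Uplift (u v : LS) : Prop :=
  v.1 = u.1 ∧ ∃ t1 a gr b gn t2,
    u.2 = t1 ++ (a, gr) :: (b, gn) :: t2 ∧
    ht (lastL (u.1, t1)) = ht gr + 1 ∧ ht gn = ht gr + 1 ∧
    ((lastL (u.1, t1) = gn ∧ a = ainv b ∧ v.2 = t1 ++ t2) ∨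
     (¬(lastL (u.1, t1) = gn ∧ a = ainv b) ∧
       v.2 = t1 ++ (a, Letter.tup gn (ainv b) gr a (lastL (u.1, t1))) :: (b, gn) :: t2))

/-- `→*`: iterated uplifting of rivers. -/
def UpliftStar : LS → LS → Prop := Relation.ReflTransGen Uplift

/-! ### The maps β₁ and related functions -/

/-- `g^{cⁿ}`: the base of the tower of centers (the first entry of `β₁(g)`'s hills). -/
def cbase : Letter → Letter
  | .tup l la c ra r => if ht l = 0 then Letter.tup l la c ra r else cbase c
  | g => g

/-- The pair list of the uphill `β_{1,l}(g)` (starting letter `cbase g`). -/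
def lPairs : Letter → List (Letter × Letter)
  | .tup l la c ra r =>
      if ht l = 0 then []
      else lPairs c ++ [(ainv la, l), (la, Letter.tup l la c ra r)]
  | _ => []

/-- The pair list of the downhill `β_{1,r}(g)` (starting letter `g`). -/
def rPairs : Letter → List (Letter × Letter)
  | .tup l _ c ra r =>
      if ht l = 0 then []
      else (ainv ra, r) :: (ra, c) :: rPairs c
  | _ => []

/-- `β₁` on a single letter of `G`. -/
def beta1L : Letter → LS
  | .one => (.one, [])
  | .x => (.one, [(.one, gxx), (.x, .one)])
  | .xp => (.one, [(.xp, gxx), (.one, .one)])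
  | g => if ht g % 2 = 0 then (cbase g, lPairs g ++ rPairs g)
         else (.one, (.one, cbase g) :: (lPairs g ++ rPairs g ++ [(.one, .one)]))

/-- `β₁` on a word (given as a list of letters): the `*`-product of the `β₁` of its letters. -/
def beta1W (l : List Letter) : LS := (.one, (l.map (fun h => (beta1L h).2)).flatten)

/-! ### Hills of mountains, peaks, reverses -/

/-- Pair list of the maximal uphill prefix. -/
def lamLPairs : Letter → List (Letter × Letter) → List (Letter × Letter)
  | _, [] => []
  | g, (a, g') :: t => if ht g < ht g' then (a, g') :: lamLPairs g' t else []

/-- The left hill `λ_l(u)` of a mountain. -/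
def lamL (u : LS) : LS := (u.1, lamLPairs u.1 u.2)

/-- The peak `κ(u)` of a mountain. -/
def peak (u : LS) : Letter := lastL (lamL u)

/-- The right hill `λ_r(u)` of a mountain. -/
def lamR (u : LS) : LS := (peak u, u.2.drop (lamLPairs u.1 u.2).length)

/-- Pair list of the reverse of a landscape. -/
def revPairs : Letter → List (Letter × Letter) → List (Letter × Letter)
  | _, [] => []
  | g, (a, g') :: t => revPairs g' t ++ [(ainv a, g)]

/-- The reverse `ū` of a landscape `u`. -/
def rev (u : LS) : LS := (lastL u, revPairs u.1 u.2)

/-! ### Green's relations on `F¹` -/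

/-- `s ≤_R t` : `s F¹ ⊆ t F¹`. -/
def leR (s t : F1) : Prop := ∀ y : F1, (∃ m, y = s * m) → ∃ m, y = t * m

/-- `s ≤_L t` : `F¹ s ⊆ F¹ t`. -/
def leL (s t : F1) : Prop := ∀ y : F1, (∃ m, y = m * s) → ∃ m, y = m * t

/-- `s ≤_J t` : `F¹ s F¹ ⊆ F¹ t F¹`. -/
def leJ (s t : F1) : Prop := ∀ y : F1, (∃ p q, y = p * s * q) → ∃ p q, y = p * t * q

/-- Green's relation `R`. -/
def Rrel (s t : F1) : Prop := leR s t ∧ leR t s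

/-- Green's relation `L`. -/
def Lrel (s t : F1) : Prop := leL s t ∧ leL t s

/-- Green's relation `J`. -/
def Jrel (s t : F1) : Prop := leJ s t ∧ leJ t s

/-- Green's relation `H = R ∩ L`. -/
def Hrel (s t : F1) : Prop := Rrel s t ∧ Lrel s t

/-- Green's relation `D = L ∨ R` (the join of the equivalences `L` and `R`). -/
def Drel : F1 → F1 → Prop := Relation.EqvGen (fun s t => Lrel s t ∨ Rrel s t)

/-- The sandwich set `S(e,f)` in `F¹`. -/
def sandw (e f : F1) : Set F1 :=
  {h | h * h = h ∧ f * h = h ∧ h * e = h ∧ e * h * f = e * f}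

/-- The ground `ε(g)`. -/
def ground : Letter → Set Letter
  | .tup l la c ra r => ground l ∪ {Letter.tup l la c ra r} ∪ ground r
  | g => {g}

/-- `F = F¹ \ {[1]}`. -/
def Fset : Set F1 := {s | s ≠ cls (wd .one)}

/-- A valley: a downhill followed by an uphill, merged at the lowest letter. -/
def IsValley (w : LS) : Prop :=
  ∃ d u : LS, IsDownhill d ∧ IsUphill u ∧ lastL d = u.1 ∧ w = star d u

/-- A canyon: a valley with `σ(w) = τ(w)`. -/
def IsCanyon (w : LS) : Prop := IsValley w ∧ w.1 = lastL w

/-- A gorge: a canyon with `w →* σ(w)`. -/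
def IsGorge (w : LS) : Prop := IsCanyon w ∧ UpliftStar w (w.1, [])


/-! ### Auxiliary material for counting hills -/

lemma ainv_ainv (a : Letter) : ainv (ainv a) = a := by cases a <;> rfl

lemma ainv_inj {a b : Letter} (h : ainv a = ainv b) : a = b := by
  have := congrArg ainv h; rwa [ainv_ainv, ainv_ainv] at this

lemma ainv_mem {a : Letter} (h : a ∈ AnchorS) : ainv a ∈ AnchorS := by
  simp only [AnchorS, Set.mem_insert_iff, Set.mem_singleton_iff] at h ⊢
  rcases h with rfl | rfl | rfl <;> simp [ainv]

/-- The structural invariant of elements of `GI n`. -/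
def Tw (n : ℕ) (g : Letter) : Prop :=
  ht g = n ∧ g.lfta ∈ AnchorS ∧ g.rgta ∈ AnchorS ∧
  (g.lfta, g.lft) ≠ (g.rgta, g.rgt) ∧
  ((n = 1 ∧ g.lft = Letter.one ∧ g.rgt = Letter.one) ∨
   (2 ≤ n ∧ g.lft ∈ GI (n-1) ∧ g.rgt ∈ GI (n-1)))

lemma spec_all : ∀ n g, (g ∈ Ge n → Tw n g ∧ g.lfta ≠ g.rgta) ∧ (g ∈ Gd n → Tw n g) := by
  intro n
  induction n using Nat.strong_induction_on with
  | _ n ih =>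
  intro g
  match n with
  | 0 => exact ⟨fun h => absurd h (by simp [Ge]), fun h => absurd h (by simp [Gd])⟩
  | 1 =>
    constructor
    · intro h
      simp only [Ge, Set.mem_singleton_iff] at h
      subst h
      refine ⟨⟨rfl, ?_, ?_, ?_, ?_⟩, ?_⟩
      · simp [gxx, Letter.lfta, AnchorS]
      · simp [gxx, Letter.rgta, AnchorS]
      · decide
      · exact Or.inl ⟨rfl, rfl, rfl⟩
      · decide
    · intro h; simp [Gd] at h
  | (i+2) =>
    constructor
    · intro h
      simp only [Ge, Set.mem_setOf_eq] at h
      obtain ⟨g', hg', hcase⟩ := h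
      obtain ⟨⟨hht, hla, hra, _, _⟩, hanne⟩ := (ih (i+1) (by omega) g').1 hg'
      have hGI : g' ∈ GI (i+1) := Or.inl hg'
      have hsub : i + 2 - 1 = i + 1 := rfl
      rcases hcase with rfl | rfl
      · refine ⟨⟨?_, ?_, ?_, ?_, ?_⟩, ?_⟩
        · simp only [ht, hht]
        · exact ainv_mem hla
        · exact ainv_mem hra
        · simp only [Letter.lfta, Letter.lft, Letter.rgta, Letter.rgt, Prod.mk.injEq, ne_eq]
          rintro ⟨h1, -⟩; exact hanne (ainv_inj h1)
        · exact Or.inr ⟨by omega, by rw [hsub]; exact hGI, by rw [hsub]; exact hGI⟩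
        · simp only [Letter.lfta, Letter.rgta, ne_eq]
          intro h1; exact hanne (ainv_inj h1)
      · refine ⟨⟨?_, ?_, ?_, ?_, ?_⟩, ?_⟩
        · simp only [ht, hht]
        · exact ainv_mem hra
        · exact ainv_mem hla
        · simp only [Letter.lfta, Letter.lft, Letter.rgta, Letter.rgt, Prod.mk.injEq, ne_eq]
          rintro ⟨h1, -⟩; exact hanne (ainv_inj h1).symm
        · exact Or.inr ⟨by omega, by rw [hsub]; exact hGI, by rw [hsub]; exact hGI⟩
        · simp only [Letter.lfta, Letter.rgta, ne_eq]
          intro h1; exact hanne (ainv_inj h1).symm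
    · intro h
      match i with
      | 0 => simp [Gd] at h
      | (j+1) =>
        simp only [Gd, Set.mem_setOf_eq] at h
        obtain ⟨l, la, c, ra, r, rfl, hl, hr, hc, hla, hra, hlr, h1, h2⟩ := h
        have htwl : Tw (j+2) l := by
          rcases hl with hl | hl
          · exact ((ih (j+2) (by omega) l).1 hl).1
          · exact (ih (j+2) (by omega) l).2 hl
        have htwr : Tw (j+2) r := by
          rcases hr with hr | hr
          · exact ((ih (j+2) (by omega) r).1 hr).1
          · exact (ih (j+2) (by omega) r).2 hr
        refine ⟨?_, hla, hra, ?_, ?_⟩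
        · simp only [ht, htwl.1]
        · simp only [Letter.lfta, Letter.lft, Letter.rgta, Letter.rgt, Prod.mk.injEq, ne_eq]
          rintro ⟨-, h3⟩; exact hlr h3
        · refine Or.inr ⟨by omega, ?_, ?_⟩
          · show l ∈ GI (j+1+2-1); exact hl
          · show r ∈ GI (j+1+2-1); exact hr

lemma GI_tw {n : ℕ} {g : Letter} (h : g ∈ GI n) : Tw n g := by
  rcases h with h | h
  · exact ((spec_all n g).1 h).1
  · exact (spec_all n g).2 h

lemma tw_pos {n : ℕ} {g : Letter} (h : Tw n g) : 1 ≤ n := by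
  rcases h.2.2.2.2 with ⟨h1, -⟩ | ⟨h2, -⟩ <;> omega

lemma GI_ne_one {n : ℕ} {g : Letter} (h : g ∈ GI n) : g ≠ Letter.one := by
  have t := GI_tw h
  intro hEq; subst hEq
  have h0 : ht Letter.one = 0 := rfl
  have h1 : ht Letter.one = n := t.1
  have h2 := tw_pos t
  omega

lemma ht_lt {g : Letter} (hg : g ∈ G5) : ht g.lft < ht g ∧ ht g.rgt < ht g := by
  obtain ⟨n, hn⟩ := hg
  have t := GI_tw hn
  rcases t.2.2.2.2 with ⟨h1, hl, hr⟩ | ⟨h2, hl, hr⟩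
  · rw [t.1, h1, hl, hr]; exact ⟨Nat.zero_lt_one, Nat.zero_lt_one⟩
  · have tl := GI_tw hl
    have tr := GI_tw hr
    rw [t.1, tl.1, tr.1]
    omega

lemma one_not_G5 : (Letter.one : Letter) ∉ G5 := fun ⟨_, hn⟩ => GI_ne_one hn rfl

/-! ### `lastL`, `Chain`, `UpChain` lemmas -/

lemma lastL_cons (h b g' : Letter) (t : List (Letter × Letter)) :
    lastL (h, (b, g') :: t) = lastL (g', t) := rfl

lemma lastL_concat (h a g : Letter) (L : List (Letter × Letter)) :
    lastL (h, L ++ [(a, g)]) = g := by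
  simp [lastL]

lemma chain_concat (L : List (Letter × Letter)) (h a g : Letter) :
    Chain h (L ++ [(a, g)]) ↔ Chain h L ∧ Anchored (lastL (h, L)) a g := by
  induction L generalizing h with
  | nil => simp [Chain, lastL]
  | cons p t ihx =>
    obtain ⟨b, g'⟩ := p
    simp [Chain, ihx, lastL_cons, and_assoc]

lemma upchain_concat (L : List (Letter × Letter)) (h a g : Letter) :
    UpChain h (L ++ [(a, g)]) ↔
      UpChain h L ∧ (lastL (h, L) = g.lft ∨ lastL (h, L) = g.rgt) := by
  induction L generalizing h with
  | nil => simp [UpChain, lastL]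
  | cons p t ihx =>
    obtain ⟨b, g'⟩ := p
    simp [UpChain, ihx, lastL_cons, and_assoc]

/-! ### Sets of uphills / downhills (allowing the empty landscape) -/

def USp (g : Letter) : Set LS :=
  {u | IsLandscape u ∧ UpChain u.1 u.2 ∧ u.1 = Letter.one ∧ lastL u = g}

def DSp (g : Letter) : Set LS :=
  {u | IsLandscape u ∧ DownChain u.1 u.2 ∧ u.1 = g ∧ lastL u = Letter.one}

def app1 (a g : Letter) : LS → LS := fun u => (u.1, u.2 ++ [(a, g)])

def cns (g a h : Letter) : LS → LS := fun u => (g, (a, h) :: u.2)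

lemma app1_inj (a g : Letter) : Function.Injective (app1 a g) := by
  rintro ⟨u1, u2⟩ ⟨v1, v2⟩ hEq
  simp only [app1, Prod.mk.injEq] at hEq
  obtain ⟨h1, h2⟩ := hEq
  simp only [Prod.mk.injEq]
  exact ⟨h1, by simpa using h2⟩

lemma USp_one : USp Letter.one = {((Letter.one : Letter), ([] : List (Letter × Letter)))} := by
  ext ⟨h0, L⟩
  constructor
  · rintro ⟨⟨hGp, hp, hc⟩, hup, hOne, hlast⟩
    have hOne' : h0 = Letter.one := hOne
    subst hOne'
    rcases List.eq_nil_or_concat L with rfl | ⟨t, ⟨a, g'⟩, hL⟩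
    · rfl
    · exfalso
      simp only [List.concat_eq_append] at hL
      subst hL
      rw [lastL_concat] at hlast
      subst hlast
      rw [upchain_concat] at hup
      rw [chain_concat] at hc
      have hprev : lastL (Letter.one, t) = Letter.one := by
        rcases hup.2 with hpv | hpv <;> exact hpv
      rcases hc.2 with ⟨h5, -⟩ | ⟨h5, -⟩
      · exact one_not_G5 h5
      · rw [hprev] at h5; exact one_not_G5 h5
  · intro hEq
    rw [Set.mem_singleton_iff] at hEq
    rw [hEq]
    exact ⟨⟨Or.inr rfl, by simp, trivial⟩, trivial, rfl, rfl⟩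

lemma DSp_one : DSp Letter.one = {((Letter.one : Letter), ([] : List (Letter × Letter)))} := by
  ext ⟨h0, L⟩
  constructor
  · rintro ⟨⟨hGp, hp, hc⟩, hdn, hOne, hlast⟩
    have hOne' : h0 = Letter.one := hOne
    subst hOne'
    cases L with
    | nil => rfl
    | cons p t =>
      exfalso
      obtain ⟨a, g'⟩ := p
      obtain ⟨hanch, -⟩ := hc
      obtain ⟨hor, -⟩ := hdn
      have hg' : g' = Letter.one := by
        rcases hor with h | h <;> exact h
      subst hg'
      rcases hanch with ⟨h5, -⟩ | ⟨h5, -⟩ <;> exact one_not_G5 h5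
  · intro hEq
    rw [Set.mem_singleton_iff] at hEq
    rw [hEq]
    exact ⟨⟨Or.inr rfl, by simp, trivial⟩, trivial, rfl, rfl⟩

lemma mem_USp_iff {g h0 : Letter} {L : List (Letter × Letter)} :
    (h0, L) ∈ USp g ↔ (h0 ∈ Gp ∧ (∀ p ∈ L, p.1 ∈ AnchorS ∧ p.2 ∈ Gp) ∧ Chain h0 L) ∧
      UpChain h0 L ∧ h0 = Letter.one ∧ lastL (h0, L) = g := Iff.rfl

lemma mem_DSp_iff {g h0 : Letter} {L : List (Letter × Letter)} :
    (h0, L) ∈ DSp g ↔ (h0 ∈ Gp ∧ (∀ p ∈ L, p.1 ∈ AnchorS ∧ p.2 ∈ Gp) ∧ Chain h0 L) ∧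
      DownChain h0 L ∧ h0 = g ∧ lastL (h0, L) = Letter.one := Iff.rfl

/-! ### Decomposition of uphills ending at `g ∈ GI n` -/

lemma USp_decomp {n : ℕ} {g : Letter} (hg : g ∈ GI n) :
    USp g = app1 g.lfta g '' USp g.lft ∪ app1 g.rgta g '' USp g.rgt := by
  have tw := GI_tw hg
  have hg5 : g ∈ G5 := ⟨n, hg⟩
  apply Set.Subset.antisymm
  · rintro ⟨h0, L⟩ hu
    rw [mem_USp_iff] at hu
    obtain ⟨⟨hGp, hpair, hch⟩, hup, rfl, hlast⟩ := hu
    rcases List.eq_nil_or_concat L with rfl | ⟨t, ⟨a, g'⟩, hL⟩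
    · exact absurd hlast.symm (GI_ne_one hg)
    · simp only [List.concat_eq_append] at hL
      subst hL
      rw [lastL_concat] at hlast
      subst g'
      rw [chain_concat] at hch
      rw [upchain_concat] at hup
      obtain ⟨hch_t, hanch⟩ := hch
      obtain ⟨hup_t, hprev⟩ := hup
      have hpair_t : ∀ p ∈ t, p.1 ∈ AnchorS ∧ p.2 ∈ Gp := fun p hp =>
        hpair p (List.mem_append_left _ hp)
      rcases hanch with ⟨-, hor⟩ | ⟨hprev5, hor⟩
      · rcases hor with ⟨hpl, rfl⟩ | ⟨hpr, rfl⟩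
        · exact Or.inl ⟨(Letter.one, t),
            mem_USp_iff.2 ⟨⟨Or.inr rfl, hpair_t, hch_t⟩, hup_t, rfl, hpl⟩, rfl⟩
        · exact Or.inr ⟨(Letter.one, t),
            mem_USp_iff.2 ⟨⟨Or.inr rfl, hpair_t, hch_t⟩, hup_t, rfl, hpr⟩, rfl⟩
      · exfalso
        have h1 := ht_lt hprev5
        have h2 := ht_lt hg5
        have hA : ht (lastL (Letter.one, t)) < ht g := by
          rcases hprev with hp | hp
          · rw [hp]; exact h2.1
          · rw [hp]; exact h2.2
        have hB : ht g < ht (lastL (Letter.one, t)) := by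
          rcases hor with ⟨he, -⟩ | ⟨he, -⟩
          · rw [he]; exact h1.1
          · rw [he]; exact h1.2
        omega
  · rintro u (⟨⟨v1, vL⟩, hv, rfl⟩ | ⟨⟨v1, vL⟩, hv, rfl⟩) <;>
      rw [mem_USp_iff] at hv
    · obtain ⟨⟨hvGp, hvpair, hvch⟩, hvup, rfl, hvlast⟩ := hv
      show (Letter.one, vL ++ [(g.lfta, g)]) ∈ USp g
      rw [mem_USp_iff]
      refine ⟨⟨Or.inr rfl, ?_, ?_⟩, ?_, rfl, ?_⟩
      · intro p hp
        rcases List.mem_append.1 hp with hp | hp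
        · exact hvpair p hp
        · simp only [List.mem_singleton] at hp
          subst hp
          exact ⟨tw.2.1, Or.inl hg5⟩
      · rw [chain_concat]
        exact ⟨hvch, Or.inl ⟨hg5, Or.inl ⟨hvlast, rfl⟩⟩⟩
      · rw [upchain_concat]
        exact ⟨hvup, Or.inl hvlast⟩
      · exact lastL_concat _ _ _ _
    · obtain ⟨⟨hvGp, hvpair, hvch⟩, hvup, rfl, hvlast⟩ := hv
      show (Letter.one, vL ++ [(g.rgta, g)]) ∈ USp g
      rw [mem_USp_iff]
      refine ⟨⟨Or.inr rfl, ?_, ?_⟩, ?_, rfl, ?_⟩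
      · intro p hp
        rcases List.mem_append.1 hp with hp | hp
        · exact hvpair p hp
        · simp only [List.mem_singleton] at hp
          subst hp
          exact ⟨tw.2.2.1, Or.inl hg5⟩
      · rw [chain_concat]
        exact ⟨hvch, Or.inl ⟨hg5, Or.inr ⟨hvlast, rfl⟩⟩⟩
      · rw [upchain_concat]
        exact ⟨hvup, Or.inr hvlast⟩
      · exact lastL_concat _ _ _ _

/-! ### Decomposition of downhills starting at `g ∈ GI n` -/

lemma DSp_decomp {n : ℕ} {g : Letter} (hg : g ∈ GI n) :
    DSp g = cns g (ainv g.lfta) g.lft '' DSp g.lft ∪ cns g (ainv g.rgta) g.rgt '' DSp g.rgt := by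
  have tw := GI_tw hg
  have hg5 : g ∈ G5 := ⟨n, hg⟩
  apply Set.Subset.antisymm
  · rintro ⟨h0, L⟩ hu
    rw [mem_DSp_iff] at hu
    obtain ⟨⟨hGp, hpair, hch⟩, hdn, hStart, hlast⟩ := hu
    subst h0
    cases L with
    | nil => exact absurd hlast (GI_ne_one hg)
    | cons p t =>
      obtain ⟨a, g'⟩ := p
      obtain ⟨hanch, hch_t⟩ := hch
      obtain ⟨hor, hdn_t⟩ := hdn
      rw [lastL_cons] at hlast
      have hpair_t : ∀ q ∈ t, q.1 ∈ AnchorS ∧ q.2 ∈ Gp := fun q hq =>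
        hpair q (List.mem_cons_of_mem _ hq)
      have hheadGp : g' ∈ Gp := (hpair (a, g') List.mem_cons_self).2
      rcases hanch with ⟨hg'5, hor2⟩ | ⟨-, hor2⟩
      · exfalso
        have h1 := ht_lt hg'5
        have h2 := ht_lt hg5
        have hA : ht g' < ht g := by
          rcases hor with hp | hp
          · rw [hp]; exact h2.1
          · rw [hp]; exact h2.2
        have hB : ht g < ht g' := by
          rcases hor2 with ⟨he, -⟩ | ⟨he, -⟩
          · rw [he]; exact h1.1
          · rw [he]; exact h1.2
        omega
      · rcases hor2 with ⟨hgl, rfl⟩ | ⟨hgl, rfl⟩ <;> subst g'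
        · refine Or.inl ⟨(g.lft, t),
            mem_DSp_iff.2 ⟨⟨hheadGp, hpair_t, hch_t⟩, hdn_t, rfl, hlast⟩, rfl⟩
        · refine Or.inr ⟨(g.rgt, t),
            mem_DSp_iff.2 ⟨⟨hheadGp, hpair_t, hch_t⟩, hdn_t, rfl, hlast⟩, rfl⟩
  · rintro u (⟨⟨v1, vL⟩, hv, rfl⟩ | ⟨⟨v1, vL⟩, hv, rfl⟩) <;>
      rw [mem_DSp_iff] at hv
    · obtain ⟨⟨hvGp, hvpair, hvch⟩, hvdn, rfl, hvlast⟩ := hv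
      show (g, (ainv g.lfta, g.lft) :: vL) ∈ DSp g
      rw [mem_DSp_iff]
      refine ⟨⟨Or.inl hg5, ?_, ?_⟩, ⟨Or.inl rfl, hvdn⟩, rfl, ?_⟩
      · intro p hp
        rcases List.mem_cons.1 hp with hp | hp
        · subst hp; exact ⟨ainv_mem tw.2.1, hvGp⟩
        · exact hvpair p hp
      · exact ⟨Or.inr ⟨hg5, Or.inl ⟨rfl, rfl⟩⟩, hvch⟩
      · rw [lastL_cons]; exact hvlast
    · obtain ⟨⟨hvGp, hvpair, hvch⟩, hvdn, rfl, hvlast⟩ := hv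
      show (g, (ainv g.rgta, g.rgt) :: vL) ∈ DSp g
      rw [mem_DSp_iff]
      refine ⟨⟨Or.inl hg5, ?_, ?_⟩, ⟨Or.inr rfl, hvdn⟩, rfl, ?_⟩
      · intro p hp
        rcases List.mem_cons.1 hp with hp | hp
        · subst hp; exact ⟨ainv_mem tw.2.2.1, hvGp⟩
        · exact hvpair p hp
      · exact ⟨Or.inr ⟨hg5, Or.inr ⟨rfl, rfl⟩⟩, hvch⟩
      · rw [lastL_cons]; exact hvlast

/-! ### Counting -/

lemma count_up : ∀ n g, ((g = Letter.one ∧ n = 0) ∨ g ∈ GI n) →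
    (USp g).Finite ∧ (USp g).ncard = 2 ^ n := by
  intro n
  induction n using Nat.strong_induction_on with
  | _ n ih =>
  intro g hg
  rcases hg with ⟨rfl, rfl⟩ | hg
  · rw [USp_one]
    exact ⟨Set.finite_singleton _, by simp⟩
  · have tw := GI_tw hg
    have hn1 : 1 ≤ n := tw_pos tw
    have hchild : ∀ h, (h = g.lft ∨ h = g.rgt) →
        ((h = Letter.one ∧ n - 1 = 0) ∨ h ∈ GI (n-1)) := by
      intro h hh
      rcases tw.2.2.2.2 with ⟨h1, hl, hr⟩ | ⟨h2, hl, hr⟩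
      · left
        constructor
        · rcases hh with rfl | rfl
          · exact hl
          · exact hr
        · omega
      · right
        rcases hh with rfl | rfl
        · exact hl
        · exact hr
    obtain ⟨finL, cardL⟩ := ih (n-1) (by omega) g.lft (hchild _ (Or.inl rfl))
    obtain ⟨finR, cardR⟩ := ih (n-1) (by omega) g.rgt (hchild _ (Or.inr rfl))
    have hdec := USp_decomp hg
    have finA := finL.image (app1 g.lfta g)
    have finB := finR.image (app1 g.rgta g)
    have disj : Disjoint (app1 g.lfta g '' USp g.lft) (app1 g.rgta g '' USp g.rgt) := by
      rw [Set.disjoint_left]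
      rintro u ⟨⟨v1, vL⟩, hv, rfl⟩ ⟨⟨w1, wL⟩, hw, heq⟩
      rw [mem_USp_iff] at hv hw
      simp only [app1, Prod.mk.injEq] at heq
      obtain ⟨h1, h2⟩ := heq
      have h3 := congrArg List.reverse h2
      simp only [List.reverse_append, List.reverse_cons, List.reverse_nil, List.nil_append,
        List.cons_append, List.singleton_append, List.cons.injEq, Prod.mk.injEq] at h3
      obtain ⟨⟨ha, -⟩, hrev⟩ := h3
      have hL : wL = vL := by
        have h4 := congrArg List.reverse hrev
        simpa using h4
      subst hL
      have e1 : w1 = Letter.one := hw.2.2.1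
      have e2 : v1 = Letter.one := hv.2.2.1
      subst e1; subst e2
      have hlv : lastL ((Letter.one : Letter), wL) = g.lft := hv.2.2.2
      have hlw : lastL ((Letter.one : Letter), wL) = g.rgt := hw.2.2.2
      apply tw.2.2.2.1
      rw [Prod.mk.injEq]
      exact ⟨ha.symm, by rw [← hlv, hlw]⟩
    constructor
    · rw [hdec]; exact finA.union finB
    · rw [hdec, Set.ncard_union_eq disj finA finB,
        Set.ncard_image_of_injective _ (app1_inj _ _),
        Set.ncard_image_of_injective _ (app1_inj _ _), cardL, cardR]
      have hsub : n - 1 + 1 = n := by omega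
      conv_rhs => rw [← hsub, pow_succ]
      ring

lemma count_down : ∀ n g, ((g = Letter.one ∧ n = 0) ∨ g ∈ GI n) →
    (DSp g).Finite ∧ (DSp g).ncard = 2 ^ n := by
  intro n
  induction n using Nat.strong_induction_on with
  | _ n ih =>
  intro g hg
  rcases hg with ⟨rfl, rfl⟩ | hg
  · rw [DSp_one]
    exact ⟨Set.finite_singleton _, by simp⟩
  · have tw := GI_tw hg
    have hn1 : 1 ≤ n := tw_pos tw
    have hchild : ∀ h, (h = g.lft ∨ h = g.rgt) →
        ((h = Letter.one ∧ n - 1 = 0) ∨ h ∈ GI (n-1)) := by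
      intro h hh
      rcases tw.2.2.2.2 with ⟨h1, hl, hr⟩ | ⟨h2, hl, hr⟩
      · left
        constructor
        · rcases hh with rfl | rfl
          · exact hl
          · exact hr
        · omega
      · right
        rcases hh with rfl | rfl
        · exact hl
        · exact hr
    obtain ⟨finL, cardL⟩ := ih (n-1) (by omega) g.lft (hchild _ (Or.inl rfl))
    obtain ⟨finR, cardR⟩ := ih (n-1) (by omega) g.rgt (hchild _ (Or.inr rfl))
    have hdec := DSp_decomp hg
    have injL : Set.InjOn (cns g (ainv g.lfta) g.lft) (DSp g.lft) := by
      rintro ⟨u1, uL⟩ hu ⟨w1, wL⟩ hw heq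
      rw [mem_DSp_iff] at hu hw
      simp only [cns, Prod.mk.injEq, List.cons.injEq] at heq
      rw [Prod.mk.injEq]
      exact ⟨(hu.2.2.1).trans (hw.2.2.1).symm, heq.2.2⟩
    have injR : Set.InjOn (cns g (ainv g.rgta) g.rgt) (DSp g.rgt) := by
      rintro ⟨u1, uL⟩ hu ⟨w1, wL⟩ hw heq
      rw [mem_DSp_iff] at hu hw
      simp only [cns, Prod.mk.injEq, List.cons.injEq] at heq
      rw [Prod.mk.injEq]
      exact ⟨(hu.2.2.1).trans (hw.2.2.1).symm, heq.2.2⟩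
    have finA := finL.image (cns g (ainv g.lfta) g.lft)
    have finB := finR.image (cns g (ainv g.rgta) g.rgt)
    have disj : Disjoint (cns g (ainv g.lfta) g.lft '' DSp g.lft)
        (cns g (ainv g.rgta) g.rgt '' DSp g.rgt) := by
      rw [Set.disjoint_left]
      rintro u ⟨v, hv, rfl⟩ ⟨w, hw, heq⟩
      simp only [cns, Prod.mk.injEq, List.cons.injEq] at heq
      obtain ⟨-, ⟨ha, hh⟩, -⟩ := heq
      apply tw.2.2.2.1
      rw [Prod.mk.injEq]
      exact ⟨ainv_inj ha.symm, hh.symm⟩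
    constructor
    · rw [hdec]; exact finA.union finB
    · rw [hdec, Set.ncard_union_eq disj finA finB,
        Set.ncard_image_of_injOn injL, Set.ncard_image_of_injOn injR, cardL, cardR]
      have hsub : n - 1 + 1 = n := by omega
      conv_rhs => rw [← hsub, pow_succ]
      ring

/-- Corollary `counthills`: if `g ∈ G_n`, there are `2ⁿ` uphills from `1` to `g` and
`2ⁿ` downhills from `g` to `1`. -/
theorem statement5 (n : ℕ) (hn : 1 ≤ n) (g : Letter) (hg : g ∈ GI n) :
    {u : LS | IsUphill u ∧ u.1 = Letter.one ∧ lastL u = g}.ncard = 2 ^ n ∧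
    {u : LS | IsDownhill u ∧ u.1 = g ∧ lastL u = Letter.one}.ncard = 2 ^ n := by
  have hne : g ≠ Letter.one := GI_ne_one hg
  have hU : {u : LS | IsUphill u ∧ u.1 = Letter.one ∧ lastL u = g} = USp g := by
    ext ⟨u1, u2⟩
    constructor
    · rintro ⟨⟨hl, -, hup⟩, h1, h2⟩
      exact ⟨hl, hup, h1, h2⟩
    · rintro ⟨hl, hup, h1, h2⟩
      refine ⟨⟨hl, ?_, hup⟩, h1, h2⟩
      intro h0
      subst h0
      have hx : u1 = g := h2
      have hy : u1 = Letter.one := h1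
      exact hne (hx.symm.trans hy)
  have hD : {u : LS | IsDownhill u ∧ u.1 = g ∧ lastL u = Letter.one} = DSp g := by
    ext ⟨u1, u2⟩
    constructor
    · rintro ⟨⟨hl, -, hdn⟩, h1, h2⟩
      exact ⟨hl, hdn, h1, h2⟩
    · rintro ⟨hl, hdn, h1, h2⟩
      refine ⟨⟨hl, ?_, hdn⟩, h1, h2⟩
      intro h0
      subst h0
      have hx : u1 = Letter.one := h2
      have hy : u1 = g := h1
      exact hne (hy.symm.trans hx)
  rw [hU, hD]
  exact ⟨(count_up n g (Or.inr hg)).2, (count_down n g (Or.inr hg)).2⟩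
end WGO
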